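/- Let π̄* be an optimal policy of the cost-based MDP M̄, with value functions Q̄* and V̄*. Let G_0 be the set of admissible intervention rules (Q̄, μ, 0) with threshold 0 satisfying Q̄(d_0, μ) = V̄*(d_0), and note G* = (Q̄*, π̄*, 0) ∈ G_0. For any G ∈ G_0 and any policy π, let M̃ and M̃* be the absorbing MDPs induced by the intervention sets of G and G* respectively (with the same penalty R̃ ≤ 0), and let d̃^π and d̃^{*,π} be the discounted state-action distributions of π in M̃ and M̃*. Then the support of d̃^π restricted to S × A is contained in the support of d̃^{*,π} restricted to S × A. -/

import Mathlib

open scoped BigOperators Classical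

noncomputable section

namespace SafeRL

variable {S A : Type*} [Fintype S] [Fintype A] [Nonempty A]

/-- `d` is a probability distribution on the finite type `S`. -/
def IsDist (d : S → ℝ) : Prop := (∀ s, 0 ≤ d s) ∧ ∑ s, d s = 1

/-- `P` is a transition kernel. -/
def IsKernel (P : S → A → S → ℝ) : Prop := ∀ s a, IsDist (P s a)

/-- `π` is a (Markov stationary stochastic) policy. -/
def IsPolicy (π : S → A → ℝ) : Prop := ∀ s, (∀ a, 0 ≤ π s a) ∧ ∑ a, π s a = 1

/-- Point mass at `s`. -/
def pureDist (s : S) : S → ℝ := fun s' => if s' = s then 1 else 0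

/-- One-step state-distribution update under policy `π`. -/
def step (P : S → A → S → ℝ) (π : S → A → ℝ) (d : S → ℝ) : S → ℝ :=
  fun s' => ∑ s, ∑ a, d s * π s a * P s a s'

/-- State distribution at time `t` when running `π` from `d0`. -/
def distAt (P : S → A → S → ℝ) (π : S → A → ℝ) (d0 : S → ℝ) (t : ℕ) : S → ℝ :=
  (step P π)^[t] d0

/-- Expected discounted return `V^π(d0)` of policy `π` from initial distribution `d0`. -/
def value (P : S → A → S → ℝ) (π : S → A → ℝ) (r : S → A → ℝ) (γ : ℝ) (d0 : S → ℝ) : ℝ :=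
  ∑' t : ℕ, γ ^ t * ∑ s, ∑ a, distAt P π d0 t s * π s a * r s a

/-- State value function `V^π(s)`. -/
def vf (P : S → A → S → ℝ) (π : S → A → ℝ) (r : S → A → ℝ) (γ : ℝ) (s : S) : ℝ :=
  value P π r γ (pureDist s)

/-- State-action value function `Q^π(s,a)`. -/
def qf (P : S → A → S → ℝ) (π : S → A → ℝ) (r : S → A → ℝ) (γ : ℝ) (s : S) (a : A) : ℝ :=
  r s a + γ * ∑ s', P s a s' * vf P π r γ s'

/-- The cost function `c(s,a) = 1{s = s_▷}` of the cost-based MDP. -/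
def cost (sbad : S) : S → A → ℝ := fun s _ => if s = sbad then 1 else 0

/-- Discounted state distribution `d^π(s)`. -/
def dsd (P : S → A → S → ℝ) (π : S → A → ℝ) (γ : ℝ) (d0 : S → ℝ) (s : S) : ℝ :=
  (1 - γ) * ∑' t : ℕ, γ ^ t * distAt P π d0 t s

/-- Discounted state-action distribution `d^π(s,a)`. -/
def dsa (P : S → A → S → ℝ) (π : S → A → ℝ) (γ : ℝ) (d0 : S → ℝ) (s : S) (a : A) : ℝ :=
  (1 - γ) * ∑' t : ℕ, γ ^ t * distAt P π d0 t s * π s a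

/-- Probability of the `h`-step trajectory prefix `f` when running `π` from `d`. -/
def prefProb (P : S → A → S → ℝ) (π : S → A → ℝ) :
    (S → ℝ) → (h : ℕ) → (Fin h → S × A) → ℝ
  | _, 0, _ => 1
  | d, h + 1, f =>
      d (f 0).1 * π (f 0).1 (f 0).2 *
        prefProb P π (P (f 0).1 (f 0).2) h (fun i => f i.succ)

/-- Probability that the `h`-step trajectory prefix generated by `π` from `d0` satisfies `E`. -/
def eventProb (P : S → A → S → ℝ) (π : S → A → ℝ) (d0 : S → ℝ) (h : ℕ)
    (E : (Fin h → S × A) → Prop) : ℝ :=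
  ∑ f : Fin h → S × A, if E f then prefProb P π d0 h f else 0

/-- `Q̄(s,μ) = E_{a ∼ μ(·|s)} Q̄(s,a)`. -/
def Qpol (Qb : S → A → ℝ) (μ : S → A → ℝ) (s : S) : ℝ := ∑ a, μ s a * Qb s a

/-- Advantage-like function `Ā(s,a) = Q̄(s,a) − Q̄(s,μ)`. -/
def Abar (Qb : S → A → ℝ) (μ : S → A → ℝ) (s : S) (a : A) : ℝ := Qb s a - Qpol Qb μ s

/-- The intervention set `I = {(s,a) ∈ S_safe × A : Ā(s,a) > η}`. -/
def intSet (Qb : S → A → ℝ) (μ : S → A → ℝ) (η : ℝ) (sbad sabs : S) : Set (S × A) :=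
  {p | p.1 ≠ sbad ∧ p.1 ≠ sabs ∧ η < Abar Qb μ p.1 p.2}

/-- The shielded policy `π' = G(π)`. -/
def shield (π μ : S → A → ℝ) (I : Set (S × A)) (sbad sabs : S) : S → A → ℝ :=
  fun s a =>
    if s = sbad ∨ s = sabs then π s a
    else (if (s, a) ∈ I then 0 else π s a)
      + μ s a * (1 - ∑ a', if (s, a') ∈ I then π s a' else 0)

/-- `σ`-admissibility of the intervention rule `(Q̄, μ, η)` (the condition does not
involve `η`): on safe states, `Q̄ ∈ [0,γ]` and
`c(s,a) + γ E_{s'∼P(·|s,a)}[Q̄(s',μ)] ≤ Q̄(s,a) + σ`. -/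
def SigmaAdmissible (P : S → A → S → ℝ) (Qb : S → A → ℝ) (μ : S → A → ℝ)
    (γ σ : ℝ) (sbad sabs : S) : Prop :=
  ∀ s, s ≠ sbad → s ≠ sabs → ∀ a : A,
    (0 ≤ Qb s a ∧ Qb s a ≤ γ) ∧
    cost sbad s a + γ * ∑ s', P s a s' * Qpol Qb μ s' ≤ Qb s a + σ

/-- Transition kernel of the absorbing MDP `M̃`; `none` plays the role of `s_†`. -/
def Ptil (P : S → A → S → ℝ) (I : Set (S × A)) : Option S → A → Option S → ℝ :=
  fun s? a s'? =>
    match s? with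
    | none => if s'? = none then 1 else 0
    | some s =>
        if (s, a) ∈ I then (if s'? = none then 1 else 0)
        else
          match s'? with
          | none => 0
          | some s' => P s a s'

/-- Reward of the absorbing MDP `M̃` with penalty `Rt` on the intervention set. -/
def rtil (r : S → A → ℝ) (I : Set (S × A)) (Rt : ℝ) : Option S → A → ℝ :=
  fun s? a =>
    match s? with
    | none => 0
    | some s => if (s, a) ∈ I then Rt else r s a

/-- Extension of a policy on `S` to `S ∪ {s_†}`, uniform at `s_†`. -/
def extPol (π : S → A → ℝ) : Option S → A → ℝ :=
  fun s? a =>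
    match s? with
    | none => (Fintype.card A : ℝ)⁻¹
    | some s => π s a

/-- Extension of an initial distribution on `S` to `S ∪ {s_†}`. -/
def extDist (d0 : S → ℝ) : Option S → ℝ :=
  fun s? => match s? with | none => 0 | some s => d0 s

/-- `P_G(π)`: discounted probability that a trajectory of `π` in `M` visits `I`. -/
def PG (P : S → A → S → ℝ) (π : S → A → ℝ) (d0 : S → ℝ) (γ : ℝ)
    (I : Set (S × A)) : ℝ :=
  (1 - γ) * ∑' h : ℕ, γ ^ h * eventProb P π d0 h (fun f => ∃ i, f i ∈ I)

/-- The deterministic policy associated to a map `g : S → A`. -/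
def detPol (g : S → A) : S → A → ℝ := fun s a => if a = g s then 1 else 0

/-- Bellman optimality operator `T̄` of the cost-based MDP. -/
def Tbar (P : S → A → S → ℝ) (sbad : S) (γ : ℝ) (Q : S → A → ℝ) : S → A → ℝ :=
  fun s a =>
    cost sbad s a +
      γ * ∑ s', P s a s' * Finset.univ.inf' Finset.univ_nonempty (fun a' => Q s' a')

section Aux
variable {S A : Type*} [Fintype S] [Fintype A] [Nonempty A]

lemma sum3_comm (f : S → A → S → ℝ) :
    ∑ s', ∑ s, ∑ a, f s a s' = ∑ s, ∑ a, ∑ s', f s a s' := by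
  rw [Finset.sum_comm]; exact Finset.sum_congr rfl fun s _ => Finset.sum_comm

lemma isDist_pure (s : S) : IsDist (pureDist s) := by
  constructor
  · intro s'; unfold pureDist; split <;> norm_num
  · simp [pureDist]

lemma isDist_step {P : S → A → S → ℝ} {π : S → A → ℝ} {d : S → ℝ}
    (hP : IsKernel P) (hπ : IsPolicy π) (hd : IsDist d) : IsDist (step P π d) := by
  constructor
  · intro s'
    apply Finset.sum_nonneg; intro s _; apply Finset.sum_nonneg; intro a _
    exact mul_nonneg (mul_nonneg (hd.1 s) ((hπ s).1 a)) ((hP s a).1 s')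
  · unfold step
    rw [sum3_comm (fun s a s' => d s * π s a * P s a s')]
    have : ∀ s a, ∑ s', d s * π s a * P s a s' = d s * π s a := fun s a => by
      rw [← Finset.mul_sum, (hP s a).2, mul_one]
    simp_rw [this]
    have : ∀ s, ∑ a, d s * π s a = d s := fun s => by
      rw [← Finset.mul_sum, (hπ s).2, mul_one]
    simp_rw [this, hd.2]

lemma distAt_zero (P : S → A → S → ℝ) (π : S → A → ℝ) (d0 : S → ℝ) :
    distAt P π d0 0 = d0 := rfl

lemma distAt_succ (P : S → A → S → ℝ) (π : S → A → ℝ) (d0 : S → ℝ) (t : ℕ) :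
    distAt P π d0 (t + 1) = distAt P π (step P π d0) t := by
  simp [distAt, Function.iterate_succ_apply]

lemma distAt_succ' (P : S → A → S → ℝ) (π : S → A → ℝ) (d0 : S → ℝ) (t : ℕ) :
    distAt P π d0 (t + 1) = step P π (distAt P π d0 t) := by
  simp [distAt, Function.iterate_succ_apply']

lemma isDist_distAt {P : S → A → S → ℝ} {π : S → A → ℝ} {d0 : S → ℝ}
    (hP : IsKernel P) (hπ : IsPolicy π) (hd : IsDist d0) (t : ℕ) :
    IsDist (distAt P π d0 t) := by
  induction t with
  | zero => exact hd
  | succ t ih => rw [distAt_succ']; exact isDist_step hP hπ ih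

lemma dist_le_one {d : S → ℝ} (hd : IsDist d) (s : S) : d s ≤ 1 := by
  rw [← hd.2]
  exact Finset.single_le_sum (fun i _ => hd.1 i) (Finset.mem_univ s)

lemma rew_bound {d : S → ℝ} {π : S → A → ℝ} {r : S → A → ℝ}
    (hd : IsDist d) (hπ : IsPolicy π) (hr : ∀ s a, 0 ≤ r s a ∧ r s a ≤ 1) :
    0 ≤ ∑ s, ∑ a, d s * π s a * r s a ∧ ∑ s, ∑ a, d s * π s a * r s a ≤ 1 := by
  constructor
  · apply Finset.sum_nonneg; intro s _; apply Finset.sum_nonneg; intro a _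
    exact mul_nonneg (mul_nonneg (hd.1 s) ((hπ s).1 a)) ((hr s a).1)
  · calc ∑ s, ∑ a, d s * π s a * r s a ≤ ∑ s, ∑ a, d s * π s a := by
          apply Finset.sum_le_sum; intro s _; apply Finset.sum_le_sum; intro a _
          calc d s * π s a * r s a ≤ d s * π s a * 1 := by
                apply mul_le_mul_of_nonneg_left (hr s a).2
                exact mul_nonneg (hd.1 s) ((hπ s).1 a)
            _ = d s * π s a := mul_one _
    _ = 1 := by
          have : ∀ s, ∑ a, d s * π s a = d s := fun s => by
            rw [← Finset.mul_sum, (hπ s).2, mul_one]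
          simp_rw [this, hd.2]

lemma summable_geo_mul {γ : ℝ} (hγ0 : 0 ≤ γ) (hγ1 : γ < 1) {g : ℕ → ℝ}
    (hg : ∀ t, |g t| ≤ 1) : Summable fun t => γ ^ t * g t := by
  apply Summable.of_norm_bounded (summable_geometric_of_lt_one hγ0 hγ1)
  intro t
  rw [Real.norm_eq_abs, abs_mul, abs_pow, abs_of_nonneg hγ0]
  calc γ ^ t * |g t| ≤ γ ^ t * 1 := by
        apply mul_le_mul_of_nonneg_left (hg t) (pow_nonneg hγ0 t)
    _ = γ ^ t := mul_one _

end Aux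
section Aux2
set_option linter.unusedSectionVars false
variable {S A : Type*} [Fintype S] [Fintype A] [Nonempty A]

lemma sum_comm3 {ι κ α : Type*} [Fintype ι] [Fintype κ] [Fintype α] (f : ι → κ → α → ℝ) :
    ∑ i, ∑ k, ∑ x, f i k x = ∑ x, ∑ i, ∑ k, f i k x := by
  calc ∑ i, ∑ k, ∑ x, f i k x = ∑ i, ∑ x, ∑ k, f i k x :=
        Finset.sum_congr rfl fun i _ => Finset.sum_comm
    _ = ∑ x, ∑ i, ∑ k, f i k x := Finset.sum_comm

lemma summable_value {P : S → A → S → ℝ} {π : S → A → ℝ} {r : S → A → ℝ} {γ : ℝ}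
    {d0 : S → ℝ} (hP : IsKernel P) (hπ : IsPolicy π) (hd : IsDist d0)
    (hγ0 : 0 ≤ γ) (hγ1 : γ < 1) (hr : ∀ s a, 0 ≤ r s a ∧ r s a ≤ 1) :
    Summable fun t => γ ^ t * ∑ s, ∑ a, distAt P π d0 t s * π s a * r s a := by
  apply summable_geo_mul hγ0 hγ1
  intro t
  have h := rew_bound (isDist_distAt hP hπ hd t) hπ hr
  rw [abs_le]; exact ⟨by linarith [h.1], h.2⟩

lemma value_rec {P : S → A → S → ℝ} {π : S → A → ℝ} {r : S → A → ℝ} {γ : ℝ}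
    {d0 : S → ℝ} (hP : IsKernel P) (hπ : IsPolicy π) (hd : IsDist d0)
    (hγ0 : 0 ≤ γ) (hγ1 : γ < 1) (hr : ∀ s a, 0 ≤ r s a ∧ r s a ≤ 1) :
    value P π r γ d0 =
      (∑ s, ∑ a, d0 s * π s a * r s a) + γ * value P π r γ (step P π d0) := by
  unfold value
  rw [Summable.tsum_eq_zero_add (summable_value hP hπ hd hγ0 hγ1 hr)]
  simp only [pow_zero, one_mul, distAt_zero]
  congr 1
  rw [← tsum_mul_left]
  apply tsum_congr
  intro t
  rw [← distAt_succ]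
  ring

lemma distAt_linear (P : S → A → S → ℝ) (π : S → A → ℝ) (d0 : S → ℝ) (t : ℕ) (s : S) :
    distAt P π d0 t s = ∑ s0, d0 s0 * distAt P π (pureDist s0) t s := by
  induction t generalizing s with
  | zero =>
      simp only [distAt_zero, pureDist]
      simp [mul_ite, Finset.sum_ite_eq]
  | succ t ih =>
      rw [distAt_succ']
      unfold step
      calc ∑ s1, ∑ a, distAt P π d0 t s1 * π s1 a * P s1 a s
          = ∑ s1, ∑ a, ∑ s0, d0 s0 * distAt P π (pureDist s0) t s1 * π s1 a * P s1 a s := by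
            apply Finset.sum_congr rfl; intro s1 _
            apply Finset.sum_congr rfl; intro a _
            rw [ih s1, Finset.sum_mul, Finset.sum_mul]
        _ = ∑ s0, ∑ s1, ∑ a, d0 s0 * distAt P π (pureDist s0) t s1 * π s1 a * P s1 a s :=
            sum_comm3 _
        _ = ∑ s0, d0 s0 * distAt P π (pureDist s0) (t + 1) s := by
            apply Finset.sum_congr rfl; intro s0 _
            rw [distAt_succ']
            unfold step
            rw [Finset.mul_sum]
            apply Finset.sum_congr rfl; intro s1 _
            rw [Finset.mul_sum]
            apply Finset.sum_congr rfl; intro a _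
            ring

lemma value_linear {P : S → A → S → ℝ} {π : S → A → ℝ} {r : S → A → ℝ} {γ : ℝ}
    (d0 : S → ℝ) (hP : IsKernel P) (hπ : IsPolicy π)
    (hγ0 : 0 ≤ γ) (hγ1 : γ < 1) (hr : ∀ s a, 0 ≤ r s a ∧ r s a ≤ 1) :
    value P π r γ d0 = ∑ s0, d0 s0 * vf P π r γ s0 := by
  unfold value vf value
  have key : ∀ t, γ ^ t * ∑ s, ∑ a, distAt P π d0 t s * π s a * r s a =
      ∑ s0, d0 s0 * (γ ^ t * ∑ s, ∑ a, distAt P π (pureDist s0) t s * π s a * r s a) := by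
    intro t
    calc γ ^ t * ∑ s, ∑ a, distAt P π d0 t s * π s a * r s a
        = ∑ s, ∑ a, ∑ s0, γ ^ t * (d0 s0 * distAt P π (pureDist s0) t s * π s a * r s a) := by
          rw [Finset.mul_sum]
          apply Finset.sum_congr rfl; intro s _
          rw [Finset.mul_sum]
          apply Finset.sum_congr rfl; intro a _
          rw [distAt_linear P π d0 t s, Finset.sum_mul, Finset.sum_mul, Finset.mul_sum]
      _ = ∑ s0, ∑ s, ∑ a, γ ^ t * (d0 s0 * distAt P π (pureDist s0) t s * π s a * r s a) :=
          sum_comm3 _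
      _ = ∑ s0, d0 s0 * (γ ^ t * ∑ s, ∑ a, distAt P π (pureDist s0) t s * π s a * r s a) := by
          simp_rw [Finset.mul_sum]
          apply Finset.sum_congr rfl; intro s0 _
          apply Finset.sum_congr rfl; intro s _
          apply Finset.sum_congr rfl; intro a _
          ring
  simp_rw [key]
  rw [Summable.tsum_finsetSum]
  · apply Finset.sum_congr rfl
    intro s0 _
    rw [tsum_mul_left]
  · intro s0 _
    exact (summable_value hP hπ (isDist_pure s0) hγ0 hγ1 hr).mul_left _

lemma step_pure (P : S → A → S → ℝ) (π : S → A → ℝ) (s s' : S) :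
    step P π (pureDist s) s' = ∑ a, π s a * P s a s' := by
  unfold step pureDist
  have h : ∀ s0, ∑ a, (if s0 = s then (1:ℝ) else 0) * π s0 a * P s0 a s' =
      if s0 = s then ∑ a, π s0 a * P s0 a s' else 0 := by
    intro s0; split <;> simp
  simp_rw [h]
  simp [Finset.sum_ite_eq']

lemma sum_pure_mul (s : S) (g : S → ℝ) : ∑ s0, pureDist s s0 * g s0 = g s := by
  unfold pureDist
  simp [ite_mul, Finset.sum_ite_eq']

lemma vf_consistency {P : S → A → S → ℝ} {π : S → A → ℝ} {r : S → A → ℝ} {γ : ℝ}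
    (hP : IsKernel P) (hπ : IsPolicy π)
    (hγ0 : 0 ≤ γ) (hγ1 : γ < 1) (hr : ∀ s a, 0 ≤ r s a ∧ r s a ≤ 1) (s : S) :
    vf P π r γ s = ∑ a, π s a * qf P π r γ s a := by
  have h1 : vf P π r γ s =
      (∑ a, π s a * r s a) + γ * ∑ s', (∑ a, π s a * P s a s') * vf P π r γ s' := by
    unfold vf
    rw [value_rec hP hπ (isDist_pure s) hγ0 hγ1 hr]
    congr 1
    · have : ∀ s0, ∑ a, pureDist s s0 * π s0 a * r s0 a =
          pureDist s s0 * ∑ a, π s0 a * r s0 a := by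
        intro s0; rw [Finset.mul_sum]
        exact Finset.sum_congr rfl fun a _ => by ring
      simp_rw [this]
      rw [sum_pure_mul]
    · rw [value_linear _ hP hπ hγ0 hγ1 hr]
      congr 1
      apply Finset.sum_congr rfl; intro s' _
      rw [step_pure]
      rfl
  rw [h1]
  unfold qf
  simp_rw [mul_add]
  rw [Finset.sum_add_distrib]
  congr 1
  calc γ * ∑ s', (∑ a, π s a * P s a s') * vf P π r γ s'
      = ∑ s', ∑ a, π s a * (γ * (P s a s' * vf P π r γ s')) := by
        rw [Finset.mul_sum]
        apply Finset.sum_congr rfl; intro s' _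
        rw [Finset.sum_mul, Finset.mul_sum]
        apply Finset.sum_congr rfl; intro a _
        ring
    _ = ∑ a, ∑ s', π s a * (γ * (P s a s' * vf P π r γ s')) := Finset.sum_comm
    _ = ∑ a, π s a * (γ * ∑ s', P s a s' * vf P π r γ s') := by
        apply Finset.sum_congr rfl; intro a _
        rw [Finset.mul_sum, Finset.mul_sum]

end Aux2
section Aux3
set_option linter.unusedSectionVars false
variable {S A : Type*} [Fintype S] [Fintype A] [Nonempty A]

lemma exists_pos_of_sum_pos {ι : Type*} [Fintype ι] {f : ι → ℝ} (h : 0 < ∑ i, f i) :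
    ∃ i, 0 < f i := by
  by_contra h'
  push_neg at h'
  have : ∑ i, f i ≤ 0 := Finset.sum_nonpos fun i _ => h' i
  linarith

lemma pos_of_mul3 {a b c : ℝ} (ha : 0 ≤ a) (hb : 0 ≤ b) (hc : 0 ≤ c)
    (h : 0 < a * b * c) : 0 < a ∧ 0 < b ∧ 0 < c := by
  refine ⟨?_, ?_, ?_⟩
  · rcases ha.lt_or_eq with h' | h'
    · exact h'
    · exfalso; rw [← h'] at h; simp at h
  · rcases hb.lt_or_eq with h' | h'
    · exact h'
    · exfalso; rw [← h'] at h; simp at h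
  · rcases hc.lt_or_eq with h' | h'
    · exact h'
    · exfalso; rw [← h'] at h; simp at h

lemma supersol {P : S → A → S → ℝ} {π : S → A → ℝ} {r : S → A → ℝ} {γ : ℝ} {W : S → ℝ}
    (hP : IsKernel P) (hπ : IsPolicy π) (hγ0 : 0 ≤ γ) (hγ1 : γ < 1)
    (hr : ∀ s a, 0 ≤ r s a ∧ r s a ≤ 1)
    (hW : ∀ s, ∑ a, π s a * (r s a + γ * ∑ s', P s a s' * W s') ≤ W s) (s : S) :
    vf P π r γ s ≤ W s := by
  have hstep : ∀ d : S → ℝ, IsDist d →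
      (∑ s0, ∑ a, d s0 * π s0 a * r s0 a) + γ * ∑ s', step P π d s' * W s' ≤
        ∑ s0, d s0 * W s0 := by
    intro d hd
    have h2 : γ * ∑ s', step P π d s' * W s' =
        ∑ s0, ∑ a, d s0 * π s0 a * (γ * ∑ s', P s0 a s' * W s') := by
      unfold step
      calc γ * ∑ s', (∑ s0, ∑ a, d s0 * π s0 a * P s0 a s') * W s'
          = ∑ s', ∑ s0, ∑ a, d s0 * π s0 a * (γ * (P s0 a s' * W s')) := by
            rw [Finset.mul_sum]
            apply Finset.sum_congr rfl; intro s' _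
            rw [Finset.sum_mul, Finset.mul_sum]
            apply Finset.sum_congr rfl; intro s0 _
            rw [Finset.sum_mul, Finset.mul_sum]
            apply Finset.sum_congr rfl; intro a _
            ring
        _ = ∑ s0, ∑ a, ∑ s', d s0 * π s0 a * (γ * (P s0 a s' * W s')) :=
            sum3_comm _
        _ = ∑ s0, ∑ a, d s0 * π s0 a * (γ * ∑ s', P s0 a s' * W s') := by
            apply Finset.sum_congr rfl; intro s0 _
            apply Finset.sum_congr rfl; intro a _
            rw [Finset.mul_sum, Finset.mul_sum]
    rw [h2, ← Finset.sum_add_distrib]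
    apply Finset.sum_le_sum
    intro s0 _
    have h3 : ∑ a, d s0 * π s0 a * r s0 a +
        ∑ a, d s0 * π s0 a * (γ * ∑ s', P s0 a s' * W s') =
        d s0 * ∑ a, π s0 a * (r s0 a + γ * ∑ s', P s0 a s' * W s') := by
      rw [← Finset.sum_add_distrib, Finset.mul_sum]
      apply Finset.sum_congr rfl; intro a _
      ring
    rw [h3]
    exact mul_le_mul_of_nonneg_left (hW s0) (hd.1 s0)
  have hInd : ∀ n : ℕ,
      (∑ t ∈ Finset.range n, γ ^ t * ∑ s0, ∑ a, distAt P π (pureDist s) t s0 * π s0 a * r s0 a)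
        + γ ^ n * ∑ s0, distAt P π (pureDist s) n s0 * W s0 ≤ W s := by
    intro n
    induction n with
    | zero => simp [distAt_zero, sum_pure_mul]
    | succ n ih =>
        rw [Finset.sum_range_succ, distAt_succ']
        have h4 := hstep (distAt P π (pureDist s) n) (isDist_distAt hP hπ (isDist_pure s) n)
        have h5 := mul_le_mul_of_nonneg_left h4 (pow_nonneg hγ0 n)
        rw [mul_add, ← mul_assoc] at h5
        rw [pow_succ]
        have h6 : γ ^ n * γ = γ ^ n * γ := rfl
        nlinarith [h5, ih]
  have hsum := summable_value hP hπ (isDist_pure s) hγ0 hγ1 hr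
  have htends := hsum.hasSum.tendsto_sum_nat
  set B := ∑ s0, |W s0| with hB
  have hBn : ∀ n, |∑ s0, distAt P π (pureDist s) n s0 * W s0| ≤ B := by
    intro n
    calc |∑ s0, distAt P π (pureDist s) n s0 * W s0|
        ≤ ∑ s0, |distAt P π (pureDist s) n s0 * W s0| := Finset.abs_sum_le_sum_abs _ _
      _ ≤ B := by
          apply Finset.sum_le_sum
          intro s0 _
          rw [abs_mul]
          have hd := isDist_distAt hP hπ (isDist_pure s) n
          rw [abs_of_nonneg (hd.1 s0)]
          calc distAt P π (pureDist s) n s0 * |W s0| ≤ 1 * |W s0| :=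
                mul_le_mul_of_nonneg_right (dist_le_one hd s0) (abs_nonneg _)
            _ = |W s0| := one_mul _
  have hg : Filter.Tendsto (fun n : ℕ => W s + γ ^ n * B) Filter.atTop (nhds (W s)) := by
    have := (tendsto_pow_atTop_nhds_zero_of_lt_one hγ0 hγ1).mul_const B
    have h7 := Filter.Tendsto.const_add (W s) this
    simpa using h7
  have hle : vf P π r γ s ≤ W s + 0 := by
    have := le_of_tendsto_of_tendsto htends hg (by
      filter_upwards with n
      have h8 := hInd n
      have h9 := (abs_le.mp (hBn n)).1
      have h10 : γ ^ n * (-B) ≤ γ ^ n * ∑ s0, distAt P π (pureDist s) n s0 * W s0 :=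
        mul_le_mul_of_nonneg_left h9 (pow_nonneg hγ0 n)
      have : (∑ t ∈ Finset.range n,
          γ ^ t * ∑ s0, ∑ a, distAt P π (pureDist s) t s0 * π s0 a * r s0 a) ≤
          W s + γ ^ n * B := by nlinarith
      exact this)
    simpa [vf, value] using this
  simpa using hle

lemma cost_bound (sbad : S) : ∀ (s : S) (a : A), 0 ≤ cost sbad s a ∧ cost sbad s a ≤ 1 := by
  intro s a; unfold cost; split <;> norm_num

lemma rew_pure (x : S) (π : S → A → ℝ) (r : S → A → ℝ) :
    ∑ s0, ∑ a, pureDist x s0 * π s0 a * r s0 a = ∑ a, π x a * r x a := by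
  have h : ∀ s0, ∑ a, pureDist x s0 * π s0 a * r s0 a =
      pureDist x s0 * ∑ a, π s0 a * r s0 a := by
    intro s0; rw [Finset.mul_sum]
    exact Finset.sum_congr rfl fun a _ => by ring
  simp_rw [h]
  rw [sum_pure_mul]

lemma step_pure_to {P : S → A → S → ℝ} {π : S → A → ℝ} {x y : S}
    (hπ : IsPolicy π) (h : ∀ a, P x a = pureDist y) :
    step P π (pureDist x) = pureDist y := by
  funext s'
  rw [step_pure]
  simp_rw [h]
  rw [← Finset.sum_mul, (hπ x).2, one_mul]

lemma vf_abs {P : S → A → S → ℝ} {π : S → A → ℝ} {γ : ℝ} {sbad sabs : S}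
    (hπ : IsPolicy π) (hne : sbad ≠ sabs) (hPabs : ∀ a, P sabs a = pureDist sabs) :
    vf P π (cost sbad) γ sabs = 0 := by
  unfold vf value
  have hdist : ∀ t, distAt P π (pureDist sabs) t = pureDist sabs := by
    intro t
    induction t with
    | zero => rfl
    | succ t ih => rw [distAt_succ', ih, step_pure_to hπ hPabs]
  have : ∀ t : ℕ, γ ^ t * ∑ s, ∑ a, distAt P π (pureDist sabs) t s * π s a * cost sbad s a
      = 0 := by
    intro t
    rw [hdist t, rew_pure]
    have : ∀ a : A, π sabs a * cost sbad sabs a = 0 := by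
      intro a; unfold cost
      rw [if_neg (Ne.symm hne), mul_zero]
    simp_rw [this]
    simp
  simp_rw [this]
  exact tsum_zero

lemma isPolicy_detPol (g : S → A) : IsPolicy (detPol g) := by
  intro s
  constructor
  · intro a; unfold detPol; split <;> norm_num
  · simp [detPol]

lemma pol_le_one {π : S → A → ℝ} (hπ : IsPolicy π) (s : S) (a : A) : π s a ≤ 1 := by
  rw [← (hπ s).2]
  exact Finset.single_le_sum (fun i _ => (hπ s).1 i) (Finset.mem_univ a)

lemma isKernel_Ptil {P : S → A → S → ℝ} (hP : IsKernel P) (I : Set (S × A)) :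
    IsKernel (Ptil P I) := by
  intro s? a
  constructor
  · intro s'?
    rcases s? with _ | s
    · simp only [Ptil]; split <;> norm_num
    · rcases s'? with _ | s'
      · simp only [Ptil]; split_ifs <;> norm_num
      · simp only [Ptil]
        split_ifs
        all_goals norm_num
        all_goals exact (hP s a).1 s'
  · rcases s? with _ | s
    · simp [Ptil, Fintype.sum_option]
    · by_cases h : (s, a) ∈ I
      · simp [Ptil, h, Fintype.sum_option]
      · simp only [Ptil, if_neg h]
        rw [Fintype.sum_option]
        simpa using (hP s a).2

lemma isPolicy_extPol {π : S → A → ℝ} (hπ : IsPolicy π) : IsPolicy (extPol π) := by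
  intro s?
  match s? with
  | none =>
      constructor
      · intro a; unfold extPol; positivity
      · unfold extPol
        rw [Finset.sum_const, Finset.card_univ, nsmul_eq_mul]
        rw [mul_inv_cancel₀]
        exact Nat.cast_ne_zero.mpr Fintype.card_ne_zero
  | some s => exact hπ s

lemma isDist_extDist {d0 : S → ℝ} (hd : IsDist d0) : IsDist (extDist d0) := by
  constructor
  · intro s?
    match s? with
    | none => exact le_refl 0
    | some s => exact hd.1 s
  · rw [Fintype.sum_option]
    simpa [extDist] using hd.2

lemma stepOpt_some (P : S → A → S → ℝ) (I : Set (S × A)) (π : S → A → ℝ)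
    (D : Option S → ℝ) (s' : S) :
    step (Ptil P I) (extPol π) D (some s') =
      ∑ s, ∑ a, D (some s) * π s a * (if (s, a) ∈ I then 0 else P s a s') := by
  unfold step
  rw [Fintype.sum_option]
  have h0 : ∑ a, D none * extPol π none a * Ptil P I none a (some s') = 0 := by
    simp [Ptil]
  rw [h0, zero_add]
  apply Finset.sum_congr rfl; intro s _
  apply Finset.sum_congr rfl; intro a _
  by_cases h : (s, a) ∈ I
  · simp [Ptil, h]
  · simp [Ptil, extPol, h]

end Aux3

section Aux4
set_option linter.unusedSectionVars false
variable {S A : Type*} [Fintype S] [Fintype A] [Nonempty A]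
lemma sum_detPol (g : S → A) (s0 : S) (X : A → ℝ) :
    ∑ a0, detPol g s0 a0 * X a0 = X (g s0) := by
  unfold detPol
  simp [ite_mul, Finset.sum_ite_eq']
end Aux4
/-- the support of `d̃^π` (restricted to `S × A`) for any rule in `G₀`
is contained in the support of `d̃^{*,π}` for the optimal rule `G* = (Q̄*, π̄*, 0)`. -/
theorem stmt_10
    (P : S → A → S → ℝ) (γ : ℝ) (sbad sabs : S) (d0 : S → ℝ) (Rt : ℝ)
    (πstar Qb π μ : S → A → ℝ)
    (hP : IsKernel P) (hγ0 : 0 ≤ γ) (hγ1 : γ < 1)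
    (hne : sbad ≠ sabs)
    (hPbad : ∀ a, P sbad a = pureDist sabs)
    (hPabs : ∀ a, P sabs a = pureDist sabs)
    (hd0 : IsDist d0) (hRt : Rt ≤ 0)
    (hπstar : IsPolicy πstar)
    (hopt : ∀ π', IsPolicy π' → ∀ s,
      vf P πstar (cost sbad) γ s ≤ vf P π' (cost sbad) γ s)
    (hπ : IsPolicy π) (hμ : IsPolicy μ)
    (hQbad : ∀ a : A, Qb sbad a = 1) (hQabs : ∀ a : A, Qb sabs a = 0)
    (hadm : SigmaAdmissible P Qb μ γ 0 sbad sabs)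
    (hinit : ∑ s, d0 s * Qpol Qb μ s = ∑ s, d0 s * vf P πstar (cost sbad) γ s) :
    ∀ (s : S) (a : A),
      dsa (Ptil P (intSet Qb μ 0 sbad sabs)) (extPol π) γ (extDist d0) (some s) a ≠ 0 →
      dsa (Ptil P (intSet (qf P πstar (cost sbad) γ) πstar 0 sbad sabs)) (extPol π) γ
        (extDist d0) (some s) a ≠ 0 := by
  intro s a hne0
  rcases eq_or_lt_of_le hγ0 with hγz | hγpos
  · -- γ = 0 : both dsa's are equal to d0 s * π s a
    have e : ∀ (I : Set (S × A)),
        dsa (Ptil P I) (extPol π) γ (extDist d0) (some s) a = d0 s * π s a := by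
      intro I
      unfold dsa
      rw [← hγz]
      rw [tsum_eq_single 0 (by
        intro t ht
        rw [zero_pow ht, zero_mul, zero_mul])]
      norm_num [distAt_zero, extDist, extPol]
    rw [e] at hne0 ⊢
    exact hne0
  · have hcostb := cost_bound (A := A) sbad
    have hVQ : ∀ s0, vf P πstar (cost sbad) γ s0 =
        ∑ a0, πstar s0 a0 * qf P πstar (cost sbad) γ s0 a0 :=
      fun s0 => vf_consistency hP hπstar hγ0 hγ1 hcostb s0
    -- C : V* ≤ Q* pointwise
    have hC : ∀ s0 a0, vf P πstar (cost sbad) γ s0 ≤ qf P πstar (cost sbad) γ s0 a0 := by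
      have hex : ∀ s0 : S, ∃ a0 : A, ∀ a1 : A,
          qf P πstar (cost sbad) γ s0 a0 ≤ qf P πstar (cost sbad) γ s0 a1 := by
        intro s0
        obtain ⟨a0, -, ha⟩ := Finset.exists_min_image Finset.univ
          (fun a1 => qf P πstar (cost sbad) γ s0 a1)
          ⟨Classical.arbitrary A, Finset.mem_univ _⟩
        exact ⟨a0, fun a1 => ha a1 (Finset.mem_univ a1)⟩
      choose g hg using hex
      have hVmin_le : ∀ s0, qf P πstar (cost sbad) γ s0 (g s0) ≤
          vf P πstar (cost sbad) γ s0 := by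
        intro s0
        rw [hVQ s0]
        calc qf P πstar (cost sbad) γ s0 (g s0)
            = ∑ a0, πstar s0 a0 * qf P πstar (cost sbad) γ s0 (g s0) := by
              rw [← Finset.sum_mul, (hπstar s0).2, one_mul]
          _ ≤ ∑ a0, πstar s0 a0 * qf P πstar (cost sbad) γ s0 a0 := by
              apply Finset.sum_le_sum; intro a0 _
              exact mul_le_mul_of_nonneg_left (hg s0 a0) ((hπstar s0).1 a0)
      have hsup : ∀ s0, vf P (detPol g) (cost sbad) γ s0 ≤
          qf P πstar (cost sbad) γ s0 (g s0) := by
        apply supersol hP (isPolicy_detPol g) hγ0 hγ1 hcostb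
        intro s0
        rw [sum_detPol]
        have h1 : ∑ s', P s0 (g s0) s' * qf P πstar (cost sbad) γ s' (g s') ≤
            ∑ s', P s0 (g s0) s' * vf P πstar (cost sbad) γ s' := by
          apply Finset.sum_le_sum; intro s' _
          exact mul_le_mul_of_nonneg_left (hVmin_le s') ((hP s0 (g s0)).1 s')
        have h2 : qf P πstar (cost sbad) γ s0 (g s0) =
            cost sbad s0 (g s0) + γ * ∑ s', P s0 (g s0) s' * vf P πstar (cost sbad) γ s' := rfl
        rw [h2]
        have h3 := mul_le_mul_of_nonneg_left h1 hγ0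
        linarith
      intro s0 a0
      calc vf P πstar (cost sbad) γ s0 ≤ vf P (detPol g) (cost sbad) γ s0 :=
            hopt _ (isPolicy_detPol g) s0
        _ ≤ qf P πstar (cost sbad) γ s0 (g s0) := hsup s0
        _ ≤ qf P πstar (cost sbad) γ s0 a0 := hg s0 a0
    -- values of Qpol at the unsafe states
    have hQpol_abs : Qpol Qb μ sabs = 0 := by
      unfold Qpol; simp [hQabs]
    have hQpol_bad : Qpol Qb μ sbad = 1 := by
      unfold Qpol; simp_rw [hQbad, mul_one]; exact (hμ sbad).2
    have hVabs : vf P πstar (cost sbad) γ sabs = 0 := vf_abs hπstar hne hPabs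
    -- D : V* ≤ Qpol Qb μ pointwise
    have hD : ∀ s0, vf P πstar (cost sbad) γ s0 ≤ Qpol Qb μ s0 := by
      have hμsup : ∀ s1, ∑ a1, μ s1 a1 *
          (cost sbad s1 a1 + γ * ∑ s', P s1 a1 s' * Qpol Qb μ s') ≤ Qpol Qb μ s1 := by
        intro s1
        by_cases hb : s1 = sbad
        · rw [hb]
          have hterm : ∀ a1 : A,
              cost sbad sbad a1 + γ * ∑ s', P sbad a1 s' * Qpol Qb μ s' = 1 := by
            intro a1
            rw [hPbad a1, sum_pure_mul sabs (Qpol Qb μ), hQpol_abs]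
            unfold cost; rw [if_pos rfl]; ring
          simp_rw [hterm, mul_one]
          rw [(hμ sbad).2, hQpol_bad]
        · by_cases ha : s1 = sabs
          · rw [ha]
            have hterm : ∀ a1 : A,
                cost sbad sabs a1 + γ * ∑ s', P sabs a1 s' * Qpol Qb μ s' = 0 := by
              intro a1
              rw [hPabs a1, sum_pure_mul sabs (Qpol Qb μ), hQpol_abs]
              unfold cost; rw [if_neg (Ne.symm hne)]; ring
            simp_rw [hterm, mul_zero]
            rw [Finset.sum_const_zero, hQpol_abs]
          · calc ∑ a1, μ s1 a1 *
                (cost sbad s1 a1 + γ * ∑ s', P s1 a1 s' * Qpol Qb μ s')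
                ≤ ∑ a1, μ s1 a1 * Qb s1 a1 := by
                  apply Finset.sum_le_sum; intro a1 _
                  apply mul_le_mul_of_nonneg_left _ ((hμ s1).1 a1)
                  have := (hadm s1 hb ha a1).2
                  linarith
              _ = Qpol Qb μ s1 := rfl
      intro s0
      calc vf P πstar (cost sbad) γ s0 ≤ vf P μ (cost sbad) γ s0 := hopt μ hμ s0
        _ ≤ Qpol Qb μ s0 := supersol hP hμ hγ0 hγ1 hcostb hμsup s0
    -- the key one-step lemma
    have hkey : ∀ s0, s0 ≠ sbad → s0 ≠ sabs →
        Qpol Qb μ s0 = vf P πstar (cost sbad) γ s0 →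
        ∀ a0, (s0, a0) ∉ intSet Qb μ 0 sbad sabs →
        ((s0, a0) ∉ intSet (qf P πstar (cost sbad) γ) πstar 0 sbad sabs ∧
          ∀ s', 0 < P s0 a0 s' → Qpol Qb μ s' = vf P πstar (cost sbad) γ s') := by
      intro s0 hb ha hinv a0 hnmem
      have hQble : Qb s0 a0 ≤ Qpol Qb μ s0 := by
        by_contra hlt
        push_neg at hlt
        exact hnmem ⟨hb, ha, by unfold Abar; linarith⟩
      have hadm0 := (hadm s0 hb ha a0).2
      have hsum_ge : ∑ s', P s0 a0 s' * vf P πstar (cost sbad) γ s' ≤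
          ∑ s', P s0 a0 s' * Qpol Qb μ s' :=
        Finset.sum_le_sum fun s' _ => mul_le_mul_of_nonneg_left (hD s') ((hP s0 a0).1 s')
      have hqf_def : qf P πstar (cost sbad) γ s0 a0 =
          cost sbad s0 a0 + γ * ∑ s', P s0 a0 s' * vf P πstar (cost sbad) γ s' := rfl
      have hCs := hC s0 a0
      have hmul := mul_le_mul_of_nonneg_left hsum_ge hγ0
      have e1 : qf P πstar (cost sbad) γ s0 a0 ≤ vf P πstar (cost sbad) γ s0 := by
        rw [hqf_def]
        linarith
      constructor
      · intro hmem
        obtain ⟨-, -, habar⟩ := hmem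
        unfold Abar at habar
        have hQpolstar : Qpol (qf P πstar (cost sbad) γ) πstar s0 =
            vf P πstar (cost sbad) γ s0 := (hVQ s0).symm
        rw [hQpolstar] at habar
        linarith
      · intro s' hP'
        have hS : ∑ s', P s0 a0 s' * Qpol Qb μ s' =
            ∑ s', P s0 a0 s' * vf P πstar (cost sbad) γ s' := by
          apply le_antisymm _ hsum_ge
          have h1 : γ * ∑ s', P s0 a0 s' * Qpol Qb μ s' ≤
              γ * ∑ s', P s0 a0 s' * vf P πstar (cost sbad) γ s' := by
            rw [hqf_def] at hCs
            linarith
          exact le_of_mul_le_mul_left h1 hγpos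
        have hzero : ∑ s'', P s0 a0 s'' *
            (Qpol Qb μ s'' - vf P πstar (cost sbad) γ s'') = 0 := by
          simp_rw [mul_sub]
          rw [Finset.sum_sub_distrib, hS, sub_self]
        have hterm := (Finset.sum_eq_zero_iff_of_nonneg (fun s'' _ =>
          mul_nonneg ((hP s0 a0).1 s'') (sub_nonneg.mpr (hD s'')))).mp hzero s'
          (Finset.mem_univ _)
        rcases mul_eq_zero.mp hterm with h | h
        · exact absurd h (ne_of_gt hP')
        · have := sub_eq_zero.mp h
          linarith
    -- base case of the invariant
    have hbase : ∀ s0, 0 < d0 s0 → Qpol Qb μ s0 = vf P πstar (cost sbad) γ s0 := by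
      have hzero : ∑ s0, d0 s0 * (Qpol Qb μ s0 - vf P πstar (cost sbad) γ s0) = 0 := by
        simp_rw [mul_sub]
        rw [Finset.sum_sub_distrib, hinit, sub_self]
      intro s0 hpos
      have hterm := (Finset.sum_eq_zero_iff_of_nonneg (fun s1 _ =>
        mul_nonneg (hd0.1 s1) (sub_nonneg.mpr (hD s1)))).mp hzero s0 (Finset.mem_univ _)
      rcases mul_eq_zero.mp hterm with h | h
      · linarith
      · have := sub_eq_zero.mp h
        linarith
    set I1 := intSet Qb μ 0 sbad sabs with hI1def
    set I2 := intSet (qf P πstar (cost sbad) γ) πstar 0 sbad sabs with hI2def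
    have hD1 : ∀ t, IsDist (distAt (Ptil P I1) (extPol π) (extDist d0) t) :=
      fun t => isDist_distAt (isKernel_Ptil hP I1) (isPolicy_extPol hπ) (isDist_extDist hd0) t
    have hD2 : ∀ t, IsDist (distAt (Ptil P I2) (extPol π) (extDist d0) t) :=
      fun t => isDist_distAt (isKernel_Ptil hP I2) (isPolicy_extPol hπ) (isDist_extDist hd0) t
    have hite_nonneg : ∀ (I : Set (S × A)) (s1 : S) (a1 : A) (s0 : S),
        0 ≤ (if (s1, a1) ∈ I then 0 else P s1 a1 s0) := by
      intro I s1 a1 s0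
      split_ifs
      · exact le_refl 0
      · exact (hP s1 a1).1 s0
    have hInv : ∀ t,
        (∀ s0, distAt (Ptil P I1) (extPol π) (extDist d0) t (some s0) ≤
          distAt (Ptil P I2) (extPol π) (extDist d0) t (some s0)) ∧
        (∀ s0, 0 < distAt (Ptil P I1) (extPol π) (extDist d0) t (some s0) →
          Qpol Qb μ s0 = vf P πstar (cost sbad) γ s0) := by
      intro t
      induction t with
      | zero =>
          constructor
          · intro s0; exact le_refl _
          · intro s0 hpos
            exact hbase s0 hpos
      | succ t ih =>
          obtain ⟨ihle, ihinv⟩ := ih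
          constructor
          · intro s0
            rw [distAt_succ', distAt_succ', stepOpt_some, stepOpt_some]
            apply Finset.sum_le_sum; intro s1 _
            apply Finset.sum_le_sum; intro a1 _
            rcases ((hD1 t).1 (some s1)).lt_or_eq with hpos | heq
            · by_cases hmem : (s1, a1) ∈ I1
              · rw [if_pos hmem, mul_zero]
                exact mul_nonneg (mul_nonneg ((hD2 t).1 _) ((hπ s1).1 a1))
                  (hite_nonneg I2 s1 a1 s0)
              · have hnot2 : (s1, a1) ∉ I2 := by
                  by_cases hb : s1 = sbad
                  · exact fun hmem2 => hmem2.1 hb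
                  · by_cases ha : s1 = sabs
                    · exact fun hmem2 => hmem2.2.1 ha
                    · exact (hkey s1 hb ha (ihinv s1 hpos) a1 hmem).1
                rw [if_neg hmem, if_neg hnot2]
                exact mul_le_mul_of_nonneg_right
                  (mul_le_mul_of_nonneg_right (ihle s1) ((hπ s1).1 a1)) ((hP s1 a1).1 s0)
            · rw [← heq]
              simp only [zero_mul]
              exact mul_nonneg (mul_nonneg ((hD2 t).1 _) ((hπ s1).1 a1))
                (hite_nonneg I2 s1 a1 s0)
          · intro s' hpos
            rw [distAt_succ', stepOpt_some] at hpos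
            obtain ⟨s1, hs1⟩ := exists_pos_of_sum_pos hpos
            obtain ⟨a1, ha1⟩ := exists_pos_of_sum_pos hs1
            obtain ⟨hp1, hp2, hp3⟩ := pos_of_mul3 ((hD1 t).1 (some s1)) ((hπ s1).1 a1)
              (hite_nonneg I1 s1 a1 s') ha1
            have hmem : (s1, a1) ∉ I1 := by
              intro hm; rw [if_pos hm] at hp3; exact lt_irrefl 0 hp3
            rw [if_neg hmem] at hp3
            by_cases hb : s1 = sbad
            · rw [hb, hPbad a1] at hp3
              have hs'e : s' = sabs := by
                by_contra hne'
                unfold pureDist at hp3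
                rw [if_neg hne'] at hp3
                exact lt_irrefl 0 hp3
              rw [hs'e, hQpol_abs, hVabs]
            · by_cases ha : s1 = sabs
              · rw [ha, hPabs a1] at hp3
                have hs'e : s' = sabs := by
                  by_contra hne'
                  unfold pureDist at hp3
                  rw [if_neg hne'] at hp3
                  exact lt_irrefl 0 hp3
                rw [hs'e, hQpol_abs, hVabs]
              · exact (hkey s1 hb ha (ihinv s1 hp1) a1 hmem).2 s' hp3
    -- conclude
    unfold dsa at hne0 ⊢
    have h1γ : (0:ℝ) < 1 - γ := by linarith
    have hbound : ∀ (I : Set (S × A))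
        (hDI : ∀ t, IsDist (distAt (Ptil P I) (extPol π) (extDist d0) t)),
        Summable (fun t => γ ^ t * distAt (Ptil P I) (extPol π) (extDist d0) t (some s) *
          extPol π (some s) a) := by
      intro I hDI
      apply (summable_geo_mul hγ0 hγ1 (g := fun t =>
        distAt (Ptil P I) (extPol π) (extDist d0) t (some s) * extPol π (some s) a) ?_).congr
        (fun t => by ring)
      intro t
      have h0 : (0:ℝ) ≤ distAt (Ptil P I) (extPol π) (extDist d0) t (some s) *
          extPol π (some s) a := mul_nonneg ((hDI t).1 _) ((hπ s).1 a)
      rw [abs_of_nonneg h0]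
      calc distAt (Ptil P I) (extPol π) (extDist d0) t (some s) * extPol π (some s) a
          ≤ 1 * 1 := mul_le_mul (dist_le_one (hDI t) _) (pol_le_one hπ s a)
            ((hπ s).1 a) zero_le_one
        _ = 1 := mul_one 1
    have hsum2 := hbound I2 hD2
    obtain ⟨t, ht⟩ : ∃ t, γ ^ t * distAt (Ptil P I1) (extPol π) (extDist d0) t (some s) *
        extPol π (some s) a ≠ 0 := by
      by_contra hall
      push_neg at hall
      apply hne0
      have : (∑' (t : ℕ), γ ^ t * distAt (Ptil P I1) (extPol π) (extDist d0) t (some s) *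
          extPol π (some s) a) = 0 := by
        rw [tsum_congr hall]
        exact tsum_zero
      rw [this, mul_zero]
    have hfpos : 0 < γ ^ t * distAt (Ptil P I1) (extPol π) (extDist d0) t (some s) *
        extPol π (some s) a :=
      lt_of_le_of_ne (mul_nonneg (mul_nonneg (pow_nonneg hγ0 t) ((hD1 t).1 _))
        ((hπ s).1 a)) (Ne.symm ht)
    obtain ⟨hgt, hdpos, hppos⟩ := pos_of_mul3 (pow_nonneg hγ0 t) ((hD1 t).1 _)
      ((hπ s).1 a) hfpos
    have hd2pos : 0 < distAt (Ptil P I2) (extPol π) (extDist d0) t (some s) :=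
      lt_of_lt_of_le hdpos ((hInv t).1 s)
    have htpos : 0 < γ ^ t * distAt (Ptil P I2) (extPol π) (extDist d0) t (some s) *
        extPol π (some s) a := mul_pos (mul_pos hgt hd2pos) hppos
    have hle := Summable.le_tsum hsum2 t (fun j _ =>
      mul_nonneg (mul_nonneg (pow_nonneg hγ0 j) ((hD2 j).1 _)) ((hπ s).1 a))
    exact (mul_pos h1γ (lt_of_lt_of_le htpos hle)).ne'

end SafeRL
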